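/- arXiv:2603.13980 — 5 statements merged into one kernel-verified Lean document; each statement's English description precedes it below -/
import Mathlib

section
/- Let A ∈ (0,1), p ∈ (0,1), ρ_A = [[(1+A)/2, −(i/2)√(1−A²)], [(i/2)√(1−A²), (1−A)/2]], and let ε_D be the dephasing channel with Kraus operators E₀ = √(1−p/2)·I, E₁ = √(p/2)·diag(1,−1). Set B = √(1 − (1−A²)(1−(p−1)²)). Then the decay of the relative entropy of imaginarity satisfies F_r(ρ_A) − F_r(ε_D(ρ_A)) = 1 − ((1+B)/2)·log₂(1+B) − ((1−B)/2)·log₂(1−B). -/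
open Matrix Kronecker BigOperators
open scoped ComplexOrder

noncomputable section

/-- A density matrix: positive semidefinite with trace 1. -/
def IsDensityMatrix {n : Type*} [Fintype n] [DecidableEq n] (ρ : Matrix n n ℂ) : Prop :=
  ρ.PosSemidef ∧ ρ.trace = 1

/-- The l₁-norm imaginarity measure: sum of |Im ρᵢⱼ| over off-diagonal entries. -/
noncomputable def Fl1 {n : Type*} [Fintype n] [DecidableEq n] (ρ : Matrix n n ℂ) : ℝ :=
  ∑ i, ∑ j, if i = j then 0 else |(ρ i j).im|

/-- The trace norm ‖M‖₁ = Tr √(M†M). -/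
noncomputable def traceNorm {n : Type*} [Fintype n] [DecidableEq n] (M : Matrix n n ℂ) : ℝ :=
  (((Matrix.posSemidef_conjTranspose_mul_self M).1.eigenvectorUnitary.1 *
      diagonal (((↑) : ℝ → ℂ) ∘ (√·) ∘ (Matrix.posSemidef_conjTranspose_mul_self M).1.eigenvalues) *
      (star (Matrix.posSemidef_conjTranspose_mul_self M).1.eigenvectorUnitary : Matrix n n ℂ)).trace).re

/-- The robustness of imaginarity: (1/2)‖ρ − ρᵀ‖₁. -/
noncomputable def FR {n : Type*} [Fintype n] [DecidableEq n] (ρ : Matrix n n ℂ) : ℝ :=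
  traceNorm (ρ - ρᵀ) / 2

/-- Von Neumann entropy (base-2), via eigenvalues of a Hermitian matrix
(junk value 0 if not Hermitian). -/
noncomputable def vnEntropy {n : Type*} [Fintype n] [DecidableEq n] (σ : Matrix n n ℂ) : ℝ :=
  if h : σ.IsHermitian then -∑ j, (h.eigenvalues j) * Real.logb 2 (h.eigenvalues j) else 0

/-- The relative entropy of imaginarity: S(Re ρ) − S(ρ), Re ρ = (ρ + ρᵀ)/2. -/
noncomputable def Fr {n : Type*} [Fintype n] [DecidableEq n] (ρ : Matrix n n ℂ) : ℝ :=
  vnEntropy ((1/2 : ℂ) • (ρ + ρᵀ)) - vnEntropy ρ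

/-- The canonical single-qubit state ρ_A. -/
noncomputable def rhoA (A : ℝ) : Matrix (Fin 2) (Fin 2) ℂ :=
  !![(((1 + A) / 2 : ℝ) : ℂ), -(Complex.I / 2) * (Real.sqrt (1 - A ^ 2) : ℂ);
     (Complex.I / 2) * (Real.sqrt (1 - A ^ 2) : ℂ), (((1 - A) / 2 : ℝ) : ℂ)]

/-- Density matrix of the maximal imaginary state |+⟩ = (|0⟩ + i|1⟩)/√2. -/
noncomputable def Mplus : Matrix (Fin 2) (Fin 2) ℂ :=
  (1/2 : ℂ) • !![1, -Complex.I; Complex.I, 1]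

/-- The dephasing channel. -/
noncomputable def dephasing (p : ℝ) (ρ : Matrix (Fin 2) (Fin 2) ℂ) : Matrix (Fin 2) (Fin 2) ℂ :=
  ((Real.sqrt (1 - p/2) : ℂ) • (1 : Matrix (Fin 2) (Fin 2) ℂ)) * ρ *
    ((Real.sqrt (1 - p/2) : ℂ) • (1 : Matrix (Fin 2) (Fin 2) ℂ))ᴴ +
  ((Real.sqrt (p/2) : ℂ) • !![1, 0; 0, -1]) * ρ * ((Real.sqrt (p/2) : ℂ) • !![1, 0; 0, -1])ᴴ


lemma eig2 {e0 e1 a b : ℝ} (hs : e0 + e1 = a + b) (hp : e0 * e1 = a * b) :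
    (e0 = a ∧ e1 = b) ∨ (e0 = b ∧ e1 = a) := by
  have h : (e0 - a) * (e0 - b) = 0 := by linear_combination e0 * hs - hp
  rcases mul_eq_zero.1 h with h | h
  · left; constructor <;> linarith
  · right; constructor <;> linarith

lemma trace_eq_sum_eigs {n : Type*} [Fintype n] [DecidableEq n] {M : Matrix n n ℂ}
    (hM : M.IsHermitian) : M.trace = ∑ i, (hM.eigenvalues i : ℂ) := by
  conv_lhs => rw [hM.spectral_theorem]
  rw [Unitary.conjStarAlgAut_apply]
  rw [Matrix.trace_mul_cycle]
  simp [Matrix.trace_diagonal, SetLike.coe_mem, mul_comm]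

lemma vnEntropy_fin2 (M : Matrix (Fin 2) (Fin 2) ℂ) (h : M.IsHermitian) (a b : ℝ)
    (htr : M.trace = (a : ℂ) + b) (hdet : M.det = (a : ℂ) * b) :
    vnEntropy M = -(a * Real.logb 2 a + b * Real.logb 2 b) := by
  rw [vnEntropy, dif_pos h]
  have hs := trace_eq_sum_eigs h
  have hd := h.det_eq_prod_eigenvalues
  rw [htr] at hs; rw [hdet] at hd
  simp only [Fin.sum_univ_two, Fin.prod_univ_two] at hs hd ⊢
  have hs' : h.eigenvalues 0 + h.eigenvalues 1 = a + b := by exact_mod_cast hs.symm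
  have hd' : h.eigenvalues 0 * h.eigenvalues 1 = a * b := by
    apply RCLike.ofReal_injective (K := ℂ)
    push_cast
    exact hd.symm
  rcases eig2 hs' hd' with ⟨h0, h1⟩ | ⟨h0, h1⟩ <;> rw [h0, h1] <;> ring

noncomputable def rhoG (A s : ℝ) : Matrix (Fin 2) (Fin 2) ℂ :=
  !![(((1 + A) / 2 : ℝ) : ℂ), -(Complex.I / 2) * (s : ℂ);
     (Complex.I / 2) * (s : ℂ), (((1 - A) / 2 : ℝ) : ℂ)]

lemma rhoG_herm (A s : ℝ) : (rhoG A s).IsHermitian := by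
  ext i j
  fin_cases i <;> fin_cases j <;>
    simp [rhoG, Matrix.conjTranspose_apply, Complex.ext_iff] <;> ring

lemma rhoG_trace (A s : ℝ) : (rhoG A s).trace = 1 := by
  simp [rhoG, Matrix.trace_fin_two_of]
  push_cast; ring

lemma rhoG_det (A s : ℝ) : (rhoG A s).det = ((1 - A^2 - s^2) / 4 : ℝ) := by
  simp [rhoG, Matrix.det_fin_two_of]
  push_cast
  ring_nf
  rw [Complex.I_sq]
  ring

lemma rhoG_transpose (A s : ℝ) : (rhoG A s)ᵀ = rhoG A (-s) := by
  ext i j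
  fin_cases i <;> fin_cases j <;>
    simp [rhoG, Matrix.transpose_apply] <;> ring

lemma rhoG_re (A s : ℝ) : (1/2 : ℂ) • (rhoG A s + (rhoG A s)ᵀ) = rhoG A 0 := by
  rw [rhoG_transpose]
  ext i j
  fin_cases i <;> fin_cases j <;>
    simp [rhoG, Matrix.smul_apply, Matrix.add_apply] <;> ring

lemma Z_conj (A s : ℝ) :
    !![1, 0; 0, -1] * rhoG A s * !![1, 0; 0, -1] = rhoG A (-s) := by
  ext i j
  fin_cases i <;> fin_cases j <;>
    simp [rhoG, Matrix.mul_apply, Fin.sum_univ_two] <;> ring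

lemma dephasing_rhoG (p A s : ℝ) (hp0 : 0 < p) (hp1 : p < 1) :
    dephasing p (rhoG A s) = rhoG A (s * (1 - p)) := by
  have hZ : (!![1, 0; 0, -1] : Matrix (Fin 2) (Fin 2) ℂ)ᴴ = !![1, 0; 0, -1] := by
    ext i j
    fin_cases i <;> fin_cases j <;> simp [Matrix.conjTranspose_apply]
  have h1 : (Real.sqrt (1 - p/2) : ℂ) * (Real.sqrt (1 - p/2) : ℂ) = ((1 - p/2 : ℝ) : ℂ) := by
    rw [← Complex.ofReal_mul, Real.mul_self_sqrt (by linarith)]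
  have h2 : (Real.sqrt (p/2) : ℂ) * (Real.sqrt (p/2) : ℂ) = ((p/2 : ℝ) : ℂ) := by
    rw [← Complex.ofReal_mul, Real.mul_self_sqrt (by linarith)]
  unfold dephasing
  simp only [Matrix.conjTranspose_smul, hZ, Matrix.conjTranspose_one, Matrix.smul_mul, Matrix.mul_smul, smul_smul, Matrix.one_mul, Matrix.mul_one,
    Complex.star_def, Complex.conj_ofReal, h1, h2, Z_conj]
  ext i j
  fin_cases i <;> fin_cases j <;>
    simp [rhoG, Matrix.smul_apply, Matrix.add_apply] <;> push_cast <;> ring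

/-- decay of the relative entropy of imaginarity under the dephasing channel. -/
theorem decay_dephasing_relEnt (A p : ℝ) (hA0 : 0 < A) (hA1 : A < 1)
    (hp0 : 0 < p) (hp1 : p < 1) :
    Fr (rhoA A) - Fr (dephasing p (rhoA A))
      = 1 - ((1 + Real.sqrt (1 - (1 - A ^ 2) * (1 - (p - 1) ^ 2))) / 2)
              * Real.logb 2 (1 + Real.sqrt (1 - (1 - A ^ 2) * (1 - (p - 1) ^ 2)))
          - ((1 - Real.sqrt (1 - (1 - A ^ 2) * (1 - (p - 1) ^ 2))) / 2)
              * Real.logb 2 (1 - Real.sqrt (1 - (1 - A ^ 2) * (1 - (p - 1) ^ 2))) := by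
  have hA2 : 0 < 1 - A ^ 2 := by nlinarith
  have hA2' : 1 - A ^ 2 < 1 := by nlinarith
  have hq : 0 < 1 - (p - 1) ^ 2 := by nlinarith
  have hq' : 1 - (p - 1) ^ 2 < 1 := by nlinarith
  set s := Real.sqrt (1 - A ^ 2) with hs_def
  set B := Real.sqrt (1 - (1 - A ^ 2) * (1 - (p - 1) ^ 2)) with hB_def
  have hargpos : 0 < 1 - (1 - A ^ 2) * (1 - (p - 1) ^ 2) := by nlinarith
  have harg1 : 1 - (1 - A ^ 2) * (1 - (p - 1) ^ 2) < 1 := by nlinarith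
  have hs2 : s ^ 2 = 1 - A ^ 2 := Real.sq_sqrt (le_of_lt hA2)
  have hB2 : B ^ 2 = 1 - (1 - A ^ 2) * (1 - (p - 1) ^ 2) := Real.sq_sqrt (le_of_lt hargpos)
  have hB0 : 0 ≤ B := Real.sqrt_nonneg _
  have hB1 : B < 1 := by
    calc B < Real.sqrt 1 := Real.sqrt_lt_sqrt (le_of_lt hargpos) harg1
      _ = 1 := Real.sqrt_one
  have hrA : rhoA A = rhoG A s := rfl
  -- entropy of rhoA : 0
  have e1 : vnEntropy (rhoG A s) = 0 := by
    rw [vnEntropy_fin2 _ (rhoG_herm A s) 1 0 (by rw [rhoG_trace]; norm_num)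
      (by rw [rhoG_det, hs2]; norm_num)]
    simp
  -- entropy of real part : H((1+A)/2)
  have e2 : vnEntropy (rhoG A 0) =
      -(((1 + A)/2) * Real.logb 2 ((1 + A)/2) + ((1 - A)/2) * Real.logb 2 ((1 - A)/2)) := by
    rw [vnEntropy_fin2 _ (rhoG_herm A 0) ((1 + A)/2) ((1 - A)/2)
      (by rw [rhoG_trace]; push_cast; ring)
      (by rw [rhoG_det]; push_cast; ring)]
  -- entropy of dephased state : H((1+B)/2)
  have e3 : vnEntropy (rhoG A (s * (1 - p))) =
      -(((1 + B)/2) * Real.logb 2 ((1 + B)/2) + ((1 - B)/2) * Real.logb 2 ((1 - B)/2)) := by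
    rw [vnEntropy_fin2 _ (rhoG_herm A _) ((1 + B)/2) ((1 - B)/2)
      (by rw [rhoG_trace]; push_cast; ring)]
    rw [rhoG_det]
    have : (1 - A ^ 2 - (s * (1 - p)) ^ 2) / 4 = (1 + B)/2 * ((1 - B)/2) := by
      have : (s * (1 - p)) ^ 2 = (1 - A ^ 2) * (p - 1) ^ 2 := by
        rw [mul_pow, hs2]; ring
      rw [this]
      nlinarith [hB2]
    rw [this]
    push_cast; ring
  have hdep : dephasing p (rhoA A) = rhoG A (s * (1 - p)) := by
    rw [hrA, dephasing_rhoG p A s hp0 hp1]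
  rw [Fr, Fr, hdep, hrA, rhoG_re, rhoG_re, e1, e2, e3]
  have l1 : Real.logb 2 ((1 + B)/2) = Real.logb 2 (1 + B) - 1 := by
    rw [Real.logb_div (by linarith) (by norm_num)]
    simp
  have l2 : Real.logb 2 ((1 - B)/2) = Real.logb 2 (1 - B) - 1 := by
    rw [Real.logb_div (by linarith) (by norm_num)]
    simp
  rw [l1, l2]
  ring
end
end

section
/- Let θ ∈ [0,π], φ ∈ [0,2π], and let |γ⟩ = cos(θ/2)|00⟩ + e^{iφ} sin(θ/2)|11⟩ be a two-qubit pure state with density matrix ρ = |γ⟩⟨γ|. Then there exists a real orthogonal 4×4 matrix O′ such that O′ ρ O′ᵀ equals the 4×4 matrix whose only nonzero entries are: (1+A)/2 at position (1,1), (1−A)/2 at position (4,4), −(i/2)√(1−A²) at position (1,4), and (i/2)√(1−A²) at position (4,1), where A = |⟨γ*|γ⟩| = |cos²(θ/2) + e^{2iφ} sin²(θ/2)|. -/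
open Matrix Kronecker BigOperators
open scoped ComplexOrder

noncomputable section

set_option maxHeartbeats 2000000 in
/-- the two-qubit state cos(θ/2)|00⟩ + e^{iφ} sin(θ/2)|11⟩ can be brought
to the canonical form by a real orthogonal 4×4 matrix. -/
theorem exists_real_orthogonal_two_qubit (θ φ : ℝ) (hθ0 : 0 ≤ θ) (hθπ : θ ≤ Real.pi)
    (hφ0 : 0 ≤ φ) (hφ2π : φ ≤ 2 * Real.pi) :
    ∃ O : Matrix (Fin 4) (Fin 4) ℂ,
      (∀ i j, (O i j).im = 0) ∧ O * Oᵀ = 1 ∧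
      O * (Matrix.of fun i j =>
            (![((Real.cos (θ/2) : ℝ) : ℂ), 0, 0,
                Complex.exp (Complex.I * (φ : ℂ)) * ((Real.sin (θ/2) : ℝ) : ℂ)] i) *
            (starRingEnd ℂ)
            (![((Real.cos (θ/2) : ℝ) : ℂ), 0, 0,
                Complex.exp (Complex.I * (φ : ℂ)) * ((Real.sin (θ/2) : ℝ) : ℂ)] j)) * Oᵀ
        = !![(((1 + ‖(((Real.cos (θ/2) : ℝ) : ℂ) ^ 2
                + Complex.exp (2 * Complex.I * (φ : ℂ)) * ((Real.sin (θ/2) : ℝ) : ℂ) ^ 2)‖) / 2 : ℝ) : ℂ),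
              0, 0,
              -(Complex.I / 2) * (Real.sqrt (1 - ‖(((Real.cos (θ/2) : ℝ) : ℂ) ^ 2
                + Complex.exp (2 * Complex.I * (φ : ℂ)) * ((Real.sin (θ/2) : ℝ) : ℂ) ^ 2)‖ ^ 2) : ℂ);
            0, 0, 0, 0;
            0, 0, 0, 0;
            (Complex.I / 2) * (Real.sqrt (1 - ‖(((Real.cos (θ/2) : ℝ) : ℂ) ^ 2
                + Complex.exp (2 * Complex.I * (φ : ℂ)) * ((Real.sin (θ/2) : ℝ) : ℂ) ^ 2)‖ ^ 2) : ℂ),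
              0, 0,
              (((1 - ‖(((Real.cos (θ/2) : ℝ) : ℂ) ^ 2
                + Complex.exp (2 * Complex.I * (φ : ℂ)) * ((Real.sin (θ/2) : ℝ) : ℂ) ^ 2)‖) / 2 : ℝ) : ℂ)] := by
  set c := Real.cos (θ/2) with hcdef
  set s := Real.sin (θ/2) with hsdef
  set cp := Real.cos φ with hcpdef
  set sp := Real.sin φ with hspdef
  have hc0 : 0 ≤ c := Real.cos_nonneg_of_mem_Icc ⟨by linarith [Real.pi_pos], by linarith⟩
  have hs0 : 0 ≤ s := Real.sin_nonneg_of_nonneg_of_le_pi (by linarith) (by linarith [Real.pi_pos])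
  have hcs : c^2 + s^2 = 1 := by rw [hcdef, hsdef]; exact Real.cos_sq_add_sin_sq _
  have hp1 : cp^2 + sp^2 = 1 := by rw [hcpdef, hspdef]; exact Real.cos_sq_add_sin_sq _
  set z : ℂ := ((c^2 - s^2 : ℝ) : ℂ) + ((2*c*s*cp : ℝ) : ℂ) * Complex.I with hzdef
  set A := ‖z‖ with hAdef
  set p := Real.cos (z.arg / 2) with hpdef
  set q := Real.sin (z.arg / 2) with hqdef
  have hpq : p^2 + q^2 = 1 := by rw [hpdef, hqdef]; exact Real.cos_sq_add_sin_sq _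
  have hzre : z.re = c^2 - s^2 := by simp [hzdef, ← Complex.ofReal_pow]
  have hzim : z.im = 2*c*s*cp := by simp [hzdef, ← Complex.ofReal_pow]
  have hcos2 : Real.cos z.arg = p^2 - q^2 := by
    have h : z.arg = 2 * (z.arg / 2) := by ring
    rw [h, Real.cos_two_mul, hpdef, hqdef]
    nlinarith [Real.cos_sq_add_sin_sq (z.arg/2)]
  have hsin2 : Real.sin z.arg = 2 * p * q := by
    have h : z.arg = 2 * (z.arg / 2) := by ring
    rw [h, Real.sin_two_mul, hpdef, hqdef]; ring
  have hx : c^2 - s^2 = A * (p^2 - q^2) := by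
    rw [← hzre, ← hcos2, hAdef]; exact (Complex.norm_mul_cos_arg z).symm
  have hy : 2*c*s*cp = A * (2*p*q) := by
    rw [← hzim, ← hsin2, hAdef]; exact (Complex.norm_mul_sin_arg z).symm
  have hA2 : (c^2-s^2)^2 + (2*c*s*cp)^2 = A^2 := by
    rw [hx, hy]; linear_combination (A^2*(p^2+q^2+1)) * hpq
  have hA0 : 0 ≤ A := norm_nonneg z
  have hexpφ : Complex.exp (Complex.I * (φ:ℂ)) = (cp:ℂ) + (sp:ℂ) * Complex.I := by
    rw [mul_comm, Complex.exp_mul_I, ← Complex.ofReal_cos, ← Complex.ofReal_sin, hcpdef, hspdef]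
  have habs : ‖(c:ℂ)^2 + Complex.exp (2 * Complex.I * (φ:ℂ)) * (s:ℂ)^2‖ = A := by
    have hexp2 : Complex.exp (2 * Complex.I * (φ:ℂ)) = ((cp:ℂ) + (sp:ℂ) * Complex.I)^2 := by
      rw [← hexpφ, ← Complex.exp_nat_mul]
      · ring_nf
    have hw : (c:ℂ)^2 + ((cp:ℂ) + (sp:ℂ) * Complex.I)^2 * (s:ℂ)^2
        = ((c^2 + (cp^2 - sp^2)*s^2 : ℝ) : ℂ) + ((2*cp*sp*s^2 : ℝ) : ℂ) * Complex.I := by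
      push_cast
      linear_combination ((s:ℂ)^2*(sp:ℂ)^2) * Complex.I_sq
    have h1 : ‖(c:ℂ)^2 + ((cp:ℂ) + (sp:ℂ) * Complex.I)^2 * (s:ℂ)^2‖^2 = A^2 := by
      rw [hw, Complex.sq_norm, Complex.normSq_add_mul_I, ← hA2]
      linear_combination (-2*(c^2-s^2)*s^2 + s^4*(cp^2+sp^2-1)) * hp1
    have h0 : 0 ≤ ‖(c:ℂ)^2 + ((cp:ℂ) + (sp:ℂ) * Complex.I)^2 * (s:ℂ)^2‖ :=
      norm_nonneg _
    rw [hexp2]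
    nlinarith [h1, h0, hA0]
  have hk : 1 - A^2 = (2*(c*s*sp))^2 := by
    rw [← hA2]
    linear_combination (-(c^2+s^2+1)) * hcs - (4*c^2*s^2) * hp1
  have hsqrt : Real.sqrt (1 - A^2) = 2 * |c*s*sp| := by
    rw [hk, Real.sqrt_sq_eq_abs, abs_mul, abs_two]
  set K := |c*s*sp| with hKdef
  set e : ℝ := if 0 ≤ sp then 1 else -1 with hedef
  have he2 : e^2 = 1 := by rw [hedef]; split <;> norm_num
  have hek : e * (c*s*sp) = K := by
    rw [hedef, hKdef]
    split
    · next h => rw [abs_of_nonneg (by positivity)]; ring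
    · next h =>
        rw [abs_of_nonpos (mul_nonpos_of_nonneg_of_nonpos (by positivity) (le_of_not_ge h))]
        ring
  have hpqC : ((p:ℝ):ℂ)^2 + ((q:ℝ):ℂ)^2 = 1 := by exact_mod_cast hpq
  have heC : ((e:ℝ):ℂ)^2 = 1 := by exact_mod_cast he2
  have hp1C : ((cp:ℝ):ℂ)^2 + ((sp:ℝ):ℂ)^2 = 1 := by exact_mod_cast hp1
  have hcsC : ((c:ℝ):ℂ)^2 + ((s:ℝ):ℂ)^2 = 1 := by exact_mod_cast hcs
  have hxC : ((c:ℝ):ℂ)^2 - ((s:ℝ):ℂ)^2 = (A:ℂ) * ((p:ℂ)^2 - (q:ℂ)^2) := by exact_mod_cast hx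
  have hyC : 2*(c:ℂ)*(s:ℂ)*(cp:ℂ) = (A:ℂ) * (2*(p:ℂ)*(q:ℂ)) := by exact_mod_cast hy
  have hekC : (e:ℂ) * ((c:ℂ)*(s:ℂ)*(sp:ℂ)) = (K:ℂ) := by exact_mod_cast hek
  refine ⟨!![((p:ℝ):ℂ), 0, 0, ((q:ℝ):ℂ); 0, 1, 0, 0; 0, 0, 1, 0;
            ((-(e*q):ℝ):ℂ), 0, 0, (((e*p):ℝ):ℂ)], ?_, ?_, ?_⟩
  · intro i j
    fin_cases i <;> fin_cases j <;> simp [Matrix.vecHead, Matrix.vecTail]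
  · ext i j
    fin_cases i <;> fin_cases j <;>
      simp [Matrix.mul_apply, Fin.sum_univ_four, Matrix.one_apply, Matrix.vecHead, Matrix.vecTail] <;>
      push_cast <;>
      first
        | ring1
        | linear_combination hpqC
        | linear_combination ((p:ℂ)^2+(q:ℂ)^2) * heC + hpqC
  · simp only [habs, hsqrt, hexpφ]
    ext i j
    fin_cases i <;> fin_cases j <;>
      simp [Matrix.mul_apply, Fin.sum_univ_four, Complex.conj_ofReal, map_add, _root_.map_mul,
        Complex.conj_I, Matrix.vecHead, Matrix.vecTail] <;>
      push_cast <;>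
      first
        | ring1
        | linear_combination (q:ℂ)^2*(s:ℂ)^2 * hp1C + (((p:ℂ)^2+(q:ℂ)^2)/2) * hcsC
            + ((1:ℂ)/2 + (A:ℂ)/2*((p:ℂ)^2+(q:ℂ)^2+1)) * hpqC
            + (((p:ℂ)^2-(q:ℂ)^2)/2) * hxC + (p:ℂ)*(q:ℂ) * hyC
            - ((q:ℂ)^2*(s:ℂ)^2*(sp:ℂ)^2) * Complex.I_sq
        | linear_combination (e:ℂ)*(p:ℂ)*(q:ℂ)*(s:ℂ)^2 * hp1C
            + ((e:ℂ)*((p:ℂ)^2-(q:ℂ)^2)/2) * hyC - (e:ℂ)*(p:ℂ)*(q:ℂ) * hxC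
            - Complex.I * hekC - Complex.I*(e:ℂ)*(c:ℂ)*(s:ℂ)*(sp:ℂ) * hpqC
            - ((e:ℂ)*(p:ℂ)*(q:ℂ)*(s:ℂ)^2*(sp:ℂ)^2) * Complex.I_sq
        | linear_combination (e:ℂ)*(p:ℂ)*(q:ℂ)*(s:ℂ)^2 * hp1C
            + ((e:ℂ)*((p:ℂ)^2-(q:ℂ)^2)/2) * hyC - (e:ℂ)*(p:ℂ)*(q:ℂ) * hxC
            + Complex.I * hekC + Complex.I*(e:ℂ)*(c:ℂ)*(s:ℂ)*(sp:ℂ) * hpqC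
            - ((e:ℂ)*(p:ℂ)*(q:ℂ)*(s:ℂ)^2*(sp:ℂ)^2) * Complex.I_sq
        | linear_combination ((q:ℂ)^2*(c:ℂ)^2 - 2*(p:ℂ)*(q:ℂ)*(c:ℂ)*(s:ℂ)*(cp:ℂ)
              + (p:ℂ)^2*(s:ℂ)^2*((cp:ℂ)^2+(sp:ℂ)^2)) * heC
            + (((p:ℂ)^2+(q:ℂ)^2)/2) * hcsC
            + ((1:ℂ)/2 - (A:ℂ)/2*((p:ℂ)^2+(q:ℂ)^2+1)) * hpqC
            - (((p:ℂ)^2-(q:ℂ)^2)/2) * hxC - (p:ℂ)*(q:ℂ) * hyC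
            + (p:ℂ)^2*(s:ℂ)^2 * hp1C
            - ((e:ℂ)^2*(p:ℂ)^2*(s:ℂ)^2*(sp:ℂ)^2) * Complex.I_sq
end
end

section
/- Let γ₁, γ₂ ∈ [0,1] and let ε_PD be the two-qubit phase damping channel with Kraus operators K_{ab} = E_a^{(γ₁)} ⊗ E_b^{(γ₂)} (a,b ∈ {0,1}), where E₀^{(γ)} = diag(1, √(1−γ)) and E₁^{(γ)} = diag(0, √γ). Then the l₁-norm imaginarity decay of the maximal imaginary state satisfies F_{l₁}(M₊ ⊗ M₊) − F_{l₁}(ε_PD(M₊ ⊗ M₊)) = 2 − √(1−γ₁) − √(1−γ₂). -/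
open Matrix Kronecker BigOperators
open scoped ComplexOrder

noncomputable section

/-- Single-qubit phase damping Kraus operators. -/
noncomputable def pdKraus (γ : ℝ) : Fin 2 → Matrix (Fin 2) (Fin 2) ℂ :=
  ![!![1, 0; 0, (Real.sqrt (1 - γ) : ℂ)], !![0, 0; 0, (Real.sqrt γ : ℂ)]]

/-- The two-qubit phase damping channel. -/
noncomputable def pd2 (γ₁ γ₂ : ℝ) (ρ : Matrix (Fin 2 × Fin 2) (Fin 2 × Fin 2) ℂ) :
    Matrix (Fin 2 × Fin 2) (Fin 2 × Fin 2) ℂ :=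
  ∑ a : Fin 2, ∑ b : Fin 2,
    (pdKraus γ₁ a ⊗ₖ pdKraus γ₂ b) * ρ * (pdKraus γ₁ a ⊗ₖ pdKraus γ₂ b)ᴴ


/-- Output of single-qubit phase damping on Mplus. -/
noncomputable def Nmat (γ : ℝ) : Matrix (Fin 2) (Fin 2) ℂ :=
  (1/2 : ℂ) • !![1, -(Real.sqrt (1 - γ) : ℂ) * Complex.I;
                 (Real.sqrt (1 - γ) : ℂ) * Complex.I, 1]

lemma kron_conjT (A B : Matrix (Fin 2) (Fin 2) ℂ) : (A ⊗ₖ B)ᴴ = Aᴴ ⊗ₖ Bᴴ := by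
  ext ⟨i, j⟩ ⟨k, l⟩
  simp [Matrix.conjTranspose_apply, Matrix.kroneckerMap_apply, mul_comm]

lemma pd2_factor (γ₁ γ₂ : ℝ) (ρ σ : Matrix (Fin 2) (Fin 2) ℂ) :
    pd2 γ₁ γ₂ (ρ ⊗ₖ σ) =
      (∑ a : Fin 2, pdKraus γ₁ a * ρ * (pdKraus γ₁ a)ᴴ) ⊗ₖ
      (∑ b : Fin 2, pdKraus γ₂ b * σ * (pdKraus γ₂ b)ᴴ) := by
  simp only [pd2, kron_conjT, ← Matrix.mul_kronecker_mul, Fin.sum_univ_two,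
    Matrix.add_kronecker, Matrix.kronecker_add]
  abel

lemma pd_single (γ : ℝ) (h0 : 0 ≤ γ) (h1 : γ ≤ 1) :
    (∑ a : Fin 2, pdKraus γ a * Mplus * (pdKraus γ a)ᴴ) = Nmat γ := by
  have s1 : (Real.sqrt (1 - γ) : ℂ) * (Real.sqrt (1 - γ) : ℂ) = (1 : ℂ) - (γ : ℂ) := by
    rw [← Complex.ofReal_mul, Real.mul_self_sqrt (by linarith)]; push_cast; ring
  have s2 : (Real.sqrt γ : ℂ) * (Real.sqrt γ : ℂ) = (γ : ℂ) := by
    rw [← Complex.ofReal_mul, Real.mul_self_sqrt h0]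
  ext i j
  fin_cases i <;> fin_cases j <;>
    simp [pdKraus, Mplus, Nmat, Matrix.mul_apply, Matrix.vecMul, dotProduct, Fin.sum_univ_two,
      Matrix.conjTranspose_apply, Complex.ext_iff] <;>
  · ring_nf
    try rw [Real.sq_sqrt (show (0:ℝ) ≤ 1 - γ by linarith), Real.sq_sqrt h0]
    try ring

/-- l₁-norm de-imaginary decay of M₊ ⊗ M₊ under two-qubit phase damping. -/
theorem pd2_l1_decay (γ₁ γ₂ : ℝ) (h₁0 : 0 ≤ γ₁) (h₁1 : γ₁ ≤ 1) (h₂0 : 0 ≤ γ₂) (h₂1 : γ₂ ≤ 1) :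
    Fl1 (Mplus ⊗ₖ Mplus) - Fl1 (pd2 γ₁ γ₂ (Mplus ⊗ₖ Mplus))
      = 2 - Real.sqrt (1 - γ₁) - Real.sqrt (1 - γ₂) := by
  have hM : Mplus ⊗ₖ Mplus = Nmat 0 ⊗ₖ Nmat 0 := by
    have : Mplus = Nmat 0 := by
      ext i j; fin_cases i <;> fin_cases j <;> simp [Mplus, Nmat]
    rw [this]
  have key : ∀ c₁ c₂ : ℝ, 0 ≤ c₁ → 0 ≤ c₂ →
      Fl1 (Nmat c₁ ⊗ₖ Nmat c₂) = Real.sqrt (1 - c₁) + Real.sqrt (1 - c₂) := by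
    intro c₁ c₂ hc₁ hc₂
    have h1 : 0 ≤ Real.sqrt (1 - c₁) := Real.sqrt_nonneg _
    have h2 : 0 ≤ Real.sqrt (1 - c₂) := Real.sqrt_nonneg _
    simp [Fl1, Fintype.sum_prod_type, Fin.sum_univ_two, Nmat,
      Matrix.kroneckerMap_apply, Prod.ext_iff, abs_of_nonneg, abs_of_nonpos,
      h1, h2, mul_nonneg h1 h2]
    ring
  rw [pd2_factor, pd_single γ₁ h₁0 h₁1, pd_single γ₂ h₂0 h₂1, hM,
    key 0 0 le_rfl le_rfl, key γ₁ γ₂ h₁0 h₂0]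
  simp
  ring
end
end

section
/- Let p₁, p₂ ∈ [0,1] and let ε_BPF be the two-qubit bit-phase flip channel with Kraus operators K_{ab} = G_a^{(p₁)} ⊗ G_b^{(p₂)} (a,b ∈ {0,1}), where G₀^{(p)} = √p·I and G₁^{(p)} = √(1−p)·Y with Y = [[0, −i],[i, 0]]. Then the maximal imaginary state is invariant under ε_BPF, i.e., ε_BPF(M₊ ⊗ M₊) = M₊ ⊗ M₊; moreover, for every 4×4 density matrix ρ with all real entries, every entry of ε_BPF(ρ) is real. Hence both the imaginary power and the de-imaginary power of ε_BPF with respect to separable states vanish for the l₁-norm imaginarity measure, the robustness of imaginarity, and the relative entropy of imaginarity. -/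
open Matrix Kronecker BigOperators
open scoped ComplexOrder

noncomputable section

/-- Single-qubit bit-phase flip Kraus operators. -/
noncomputable def bpfKraus (p : ℝ) : Fin 2 → Matrix (Fin 2) (Fin 2) ℂ :=
  ![(Real.sqrt p : ℂ) • (1 : Matrix (Fin 2) (Fin 2) ℂ),
    (Real.sqrt (1 - p) : ℂ) • !![0, -Complex.I; Complex.I, 0]]

/-- The two-qubit bit-phase flip channel. -/
noncomputable def bpf2 (p₁ p₂ : ℝ) (ρ : Matrix (Fin 2 × Fin 2) (Fin 2 × Fin 2) ℂ) :
    Matrix (Fin 2 × Fin 2) (Fin 2 × Fin 2) ℂ :=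
  ∑ a : Fin 2, ∑ b : Fin 2,
    (bpfKraus p₁ a ⊗ₖ bpfKraus p₂ b) * ρ * (bpfKraus p₁ a ⊗ₖ bpfKraus p₂ b)ᴴ

/-! ### Auxiliary lemmas -/

lemma kron_conjT_s18 {l m n p : Type*} [Fintype l] [Fintype m] [Fintype n] [Fintype p]
    (A : Matrix l m ℂ) (B : Matrix n p ℂ) : (A ⊗ₖ B)ᴴ = Aᴴ ⊗ₖ Bᴴ := by
  ext ⟨i, i'⟩ ⟨j, j'⟩
  simp [Matrix.conjTranspose_apply, Matrix.kroneckerMap_apply, star_mul']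

lemma Y_Mplus_Y : (!![0, -Complex.I; Complex.I, 0] : Matrix (Fin 2) (Fin 2) ℂ) * Mplus *
    (!![0, -Complex.I; Complex.I, 0] : Matrix (Fin 2) (Fin 2) ℂ)ᴴ = Mplus := by
  ext i j
  fin_cases i <;> fin_cases j <;>
    simp [Mplus, Matrix.mul_apply, Fin.sum_univ_two, Complex.ext_iff]

/-- Coefficients for the two Kraus operators. -/
def coefK (p : ℝ) : Fin 2 → ℝ := ![p, 1 - p]

lemma kraus_fix (p : ℝ) (hp0 : 0 ≤ p) (hp1 : p ≤ 1) (a : Fin 2) :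
    bpfKraus p a * Mplus * (bpfKraus p a)ᴴ = ((coefK p a : ℝ) : ℂ) • Mplus := by
  fin_cases a
  · show ((Real.sqrt p : ℂ) • (1 : Matrix (Fin 2) (Fin 2) ℂ)) * Mplus *
      ((Real.sqrt p : ℂ) • (1 : Matrix (Fin 2) (Fin 2) ℂ))ᴴ = _
    rw [Matrix.conjTranspose_smul, Matrix.conjTranspose_one]
    simp only [Matrix.smul_mul, Matrix.mul_smul, one_mul, mul_one, smul_smul]
    rw [Complex.star_def, Complex.conj_ofReal, ← Complex.ofReal_mul,
      Real.mul_self_sqrt hp0]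
    rfl
  · show ((Real.sqrt (1 - p) : ℂ) • (!![0, -Complex.I; Complex.I, 0] : Matrix (Fin 2) (Fin 2) ℂ)) *
      Mplus * ((Real.sqrt (1 - p) : ℂ) • !![0, -Complex.I; Complex.I, 0])ᴴ = _
    rw [Matrix.conjTranspose_smul]
    simp only [Matrix.smul_mul, Matrix.mul_smul, smul_smul]
    rw [Complex.star_def, Complex.conj_ofReal, ← Complex.ofReal_mul,
      Real.mul_self_sqrt (by linarith), Y_Mplus_Y]
    rfl

lemma bpf2_fixes (p₁ p₂ : ℝ) (hp₁0 : 0 ≤ p₁) (hp₁1 : p₁ ≤ 1)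
    (hp₂0 : 0 ≤ p₂) (hp₂1 : p₂ ≤ 1) :
    bpf2 p₁ p₂ (Mplus ⊗ₖ Mplus) = Mplus ⊗ₖ Mplus := by
  unfold bpf2
  have key : ∀ a b : Fin 2,
      (bpfKraus p₁ a ⊗ₖ bpfKraus p₂ b) * (Mplus ⊗ₖ Mplus) *
        (bpfKraus p₁ a ⊗ₖ bpfKraus p₂ b)ᴴ
      = ((coefK p₁ a * coefK p₂ b : ℝ) : ℂ) • (Mplus ⊗ₖ Mplus) := by
    intro a b
    rw [kron_conjT_s18, ← Matrix.mul_kronecker_mul, ← Matrix.mul_kronecker_mul,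
      kraus_fix p₁ hp₁0 hp₁1 a, kraus_fix p₂ hp₂0 hp₂1 b,
      Matrix.smul_kronecker, Matrix.kronecker_smul, smul_smul, ← Complex.ofReal_mul]
  simp only [key, Fin.sum_univ_two, ← add_smul]
  have h1 : (coefK p₁ 0 * coefK p₂ 0 + coefK p₁ 0 * coefK p₂ 1 +
      (coefK p₁ 1 * coefK p₂ 0 + coefK p₁ 1 * coefK p₂ 1) : ℝ) = 1 := by
    simp only [coefK, Matrix.cons_val_zero, Matrix.cons_val_one, Matrix.head_cons]; ring
  rw [← Complex.ofReal_add, ← Complex.ofReal_add, ← Complex.ofReal_add, h1,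
    Complex.ofReal_one, one_smul]

/-- A matrix all of whose entries are real, or all purely imaginary. -/
def RoI {m n : Type*} (K : Matrix m n ℂ) : Prop :=
  (∀ i j, (K i j).im = 0) ∨ (∀ i j, (K i j).re = 0)

lemma roi_conj_real {n : Type*} [Fintype n] {K ρ : Matrix n n ℂ} (hK : RoI K)
    (hρ : ∀ i j, (ρ i j).im = 0) : ∀ i j, ((K * ρ * Kᴴ) i j).im = 0 := by
  intro i j
  rw [Matrix.mul_apply, Complex.im_sum]
  refine Finset.sum_eq_zero fun l _ => ?_
  rw [Matrix.mul_apply, Matrix.conjTranspose_apply, Finset.sum_mul, Complex.im_sum]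
  refine Finset.sum_eq_zero fun k _ => ?_
  rcases hK with h | h <;>
    simp [Complex.mul_im, Complex.mul_re, hρ k l, h i k, h j l]

lemma roi_kron {K L : Matrix (Fin 2) (Fin 2) ℂ} (hK : RoI K) (hL : RoI L) :
    RoI (K ⊗ₖ L) := by
  rcases hK with hK | hK <;> rcases hL with hL | hL
  · exact Or.inl fun ⟨i, i'⟩ ⟨j, j'⟩ => by
      simp [Matrix.kroneckerMap_apply, Complex.mul_im, hK i j, hL i' j']
  · exact Or.inr fun ⟨i, i'⟩ ⟨j, j'⟩ => by
      simp [Matrix.kroneckerMap_apply, Complex.mul_re, hK i j, hL i' j']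
  · exact Or.inr fun ⟨i, i'⟩ ⟨j, j'⟩ => by
      simp [Matrix.kroneckerMap_apply, Complex.mul_re, hK i j, hL i' j']
  · exact Or.inl fun ⟨i, i'⟩ ⟨j, j'⟩ => by
      simp [Matrix.kroneckerMap_apply, Complex.mul_im, hK i j, hL i' j']

lemma roi_bpfKraus (p : ℝ) (a : Fin 2) : RoI (bpfKraus p a) := by
  fin_cases a
  · exact Or.inl fun i j => by
      fin_cases i <;> fin_cases j <;> simp [bpfKraus, Matrix.one_apply]
  · exact Or.inr fun i j => by
      fin_cases i <;> fin_cases j <;> simp [bpfKraus]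

lemma bpf2_real (p₁ p₂ : ℝ) (ρ : Matrix (Fin 2 × Fin 2) (Fin 2 × Fin 2) ℂ)
    (hρ : ∀ i j, (ρ i j).im = 0) : ∀ i j, ((bpf2 p₁ p₂ ρ) i j).im = 0 := by
  intro i j
  unfold bpf2
  rw [Matrix.sum_apply]
  rw [Complex.im_sum]
  refine Finset.sum_eq_zero fun a _ => ?_
  rw [Matrix.sum_apply, Complex.im_sum]
  refine Finset.sum_eq_zero fun b _ => ?_
  exact roi_conj_real (roi_kron (roi_bpfKraus p₁ a) (roi_bpfKraus p₂ b)) hρ i j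

lemma bpf2_herm (p₁ p₂ : ℝ) {ρ : Matrix (Fin 2 × Fin 2) (Fin 2 × Fin 2) ℂ}
    (hρ : ρ.IsHermitian) : (bpf2 p₁ p₂ ρ).IsHermitian := by
  unfold bpf2
  unfold Matrix.IsHermitian
  rw [Matrix.conjTranspose_sum]
  refine Finset.sum_congr rfl fun a _ => ?_
  rw [Matrix.conjTranspose_sum]
  refine Finset.sum_congr rfl fun b _ => ?_
  rw [Matrix.conjTranspose_mul, Matrix.conjTranspose_mul, Matrix.conjTranspose_conjTranspose,
    hρ.eq, Matrix.mul_assoc]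

lemma traceNorm_zero {n : Type*} [Fintype n] [DecidableEq n] :
    traceNorm (0 : Matrix n n ℂ) = 0 := by
  unfold traceNorm
  have : (Matrix.posSemidef_conjTranspose_mul_self (0 : Matrix n n ℂ)).1.eigenvalues = 0 :=
    (Matrix.posSemidef_conjTranspose_mul_self (0 : Matrix n n ℂ)).1.eigenvalues_eq_zero_iff.mpr
      (by simp)
  rw [this]
  simp [Function.comp_def]

lemma transpose_of_real_herm {n : Type*} [Fintype n] [DecidableEq n]
    {ρ : Matrix n n ℂ} (hh : ρ.IsHermitian) (hr : ∀ i j, (ρ i j).im = 0) : ρᵀ = ρ := by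
  ext i j
  have := hh.apply i j
  rw [Matrix.transpose_apply]
  rw [← this]
  exact Complex.ext (by simp) (by simp [hr i j, hr j i])

lemma real_vanish {ρ : Matrix (Fin 2 × Fin 2) (Fin 2 × Fin 2) ℂ} (hh : ρ.IsHermitian)
    (hr : ∀ i j, (ρ i j).im = 0) : Fl1 ρ = 0 ∧ FR ρ = 0 ∧ Fr ρ = 0 := by
  have ht := transpose_of_real_herm hh hr
  refine ⟨?_, ?_, ?_⟩
  · unfold Fl1
    refine Finset.sum_eq_zero fun i _ => Finset.sum_eq_zero fun j _ => ?_
    simp [hr i j]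
  · unfold FR
    rw [ht, sub_self, traceNorm_zero, zero_div]
  · unfold Fr
    rw [ht]
    have : (1/2 : ℂ) • (ρ + ρ) = ρ := by
      rw [← two_smul ℂ ρ, smul_smul]; norm_num
    rw [this, sub_self]

/-- the two-qubit bit-phase flip channel fixes the maximal imaginary state
M₊ ⊗ M₊ and preserves realness of real density matrices; hence its imaginary and
de-imaginary powers vanish for F_{l₁}, F_R and F_r. -/
theorem bpf2_powers_vanish (p₁ p₂ : ℝ) (hp₁0 : 0 ≤ p₁) (hp₁1 : p₁ ≤ 1)
    (hp₂0 : 0 ≤ p₂) (hp₂1 : p₂ ≤ 1) :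
    bpf2 p₁ p₂ (Mplus ⊗ₖ Mplus) = Mplus ⊗ₖ Mplus ∧
    (∀ ρ : Matrix (Fin 2 × Fin 2) (Fin 2 × Fin 2) ℂ, IsDensityMatrix ρ →
      (∀ i j, (ρ i j).im = 0) → ∀ i j, ((bpf2 p₁ p₂ ρ) i j).im = 0) ∧
    Fl1 (Mplus ⊗ₖ Mplus) - Fl1 (bpf2 p₁ p₂ (Mplus ⊗ₖ Mplus)) = 0 ∧
    FR (Mplus ⊗ₖ Mplus) - FR (bpf2 p₁ p₂ (Mplus ⊗ₖ Mplus)) = 0 ∧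
    Fr (Mplus ⊗ₖ Mplus) - Fr (bpf2 p₁ p₂ (Mplus ⊗ₖ Mplus)) = 0 ∧
    (∀ ρ : Matrix (Fin 2 × Fin 2) (Fin 2 × Fin 2) ℂ, IsDensityMatrix ρ →
      (∀ i j, (ρ i j).im = 0) →
      Fl1 (bpf2 p₁ p₂ ρ) = 0 ∧ FR (bpf2 p₁ p₂ ρ) = 0 ∧ Fr (bpf2 p₁ p₂ ρ) = 0) := by
  have hfix := bpf2_fixes p₁ p₂ hp₁0 hp₁1 hp₂0 hp₂1
  refine ⟨hfix, fun ρ _ hr => bpf2_real p₁ p₂ ρ hr, by rw [hfix, sub_self],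
    by rw [hfix, sub_self], by rw [hfix, sub_self], fun ρ hρ hr => ?_⟩
  exact real_vanish (bpf2_herm p₁ p₂ hρ.1.1) (bpf2_real p₁ p₂ ρ hr)

end
end

section
/- Let p₁, p₂ ∈ [0,1] and let ε_DEP be the two-qubit depolarizing channel acting as ε_DEP(σ ⊗ τ) = (1−p₁)(1−p₂)·σ⊗τ + p₁(1−p₂)·(I/2)⊗τ + (1−p₁)p₂·σ⊗(I/2) + p₁p₂·(I/2)⊗(I/2), i.e., each qubit is independently replaced by the completely mixed state I/2 with probability p₁ (first qubit) and p₂ (second qubit). Then the decays of the maximal imaginary state satisfy F_{l₁}(M₊ ⊗ M₊) − F_{l₁}(ε_DEP(M₊ ⊗ M₊)) = p₁ + p₂ and F_R(M₊ ⊗ M₊) − F_R(ε_DEP(M₊ ⊗ M₊)) = (p₁ + p₂ − |p₁ − p₂|)/2. -/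
open Matrix Kronecker BigOperators
open scoped ComplexOrder

noncomputable section

/-- The two-qubit depolarizing channel, acting on product states: each qubit is
independently replaced by I/2 with probability p₁ (resp. p₂). -/
noncomputable def dep2 (p₁ p₂ : ℝ) (σ τ : Matrix (Fin 2) (Fin 2) ℂ) :
    Matrix (Fin 2 × Fin 2) (Fin 2 × Fin 2) ℂ :=
  (((1 - p₁) * (1 - p₂) : ℝ) : ℂ) • (σ ⊗ₖ τ)
  + ((p₁ * (1 - p₂) : ℝ) : ℂ) • (((1/2 : ℂ) • (1 : Matrix (Fin 2) (Fin 2) ℂ)) ⊗ₖ τ)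
  + (((1 - p₁) * p₂ : ℝ) : ℂ) • (σ ⊗ₖ ((1/2 : ℂ) • (1 : Matrix (Fin 2) (Fin 2) ℂ)))
  + ((p₁ * p₂ : ℝ) : ℂ) • (((1/2 : ℂ) • (1 : Matrix (Fin 2) (Fin 2) ℂ))
      ⊗ₖ ((1/2 : ℂ) • (1 : Matrix (Fin 2) (Fin 2) ℂ)))

noncomputable def Mab (a : ℝ) : Matrix (Fin 2) (Fin 2) ℂ :=
  (1/2 : ℂ) • !![1, -(Complex.I * a); Complex.I * a, 1]

def Y : Matrix (Fin 2) (Fin 2) ℂ := !![0, -Complex.I; Complex.I, 0]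

lemma hY2 : Y * Y = 1 := by
  ext i j
  fin_cases i <;> fin_cases j <;>
    simp [Y, Matrix.mul_apply, Fin.sum_univ_two, Matrix.one_apply, Complex.ext_iff]

lemma hD (a b : ℝ) :
    (Mab a ⊗ₖ Mab b) - (Mab a ⊗ₖ Mab b)ᵀ
      = ((a/2 : ℝ) : ℂ) • (Y ⊗ₖ (1 : Matrix (Fin 2) (Fin 2) ℂ))
        + ((b/2 : ℝ) : ℂ) • ((1 : Matrix (Fin 2) (Fin 2) ℂ) ⊗ₖ Y) := by
  ext ⟨i, k⟩ ⟨j, l⟩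
  fin_cases i <;> fin_cases k <;> fin_cases j <;> fin_cases l <;>
    simp [Mab, Y, kroneckerMap_apply, Matrix.one_apply, Complex.ext_iff] <;> ring

lemma hCH : ((Y ⊗ₖ Y)ᴴ : Matrix (Fin 2 × Fin 2) (Fin 2 × Fin 2) ℂ) = Y ⊗ₖ Y := by
  ext ⟨i, k⟩ ⟨j, l⟩
  fin_cases i <;> fin_cases k <;> fin_cases j <;> fin_cases l <;>
    simp [Y, kroneckerMap_apply, Matrix.conjTranspose_apply, Complex.ext_iff]

lemma hAH : ((Y ⊗ₖ (1 : Matrix (Fin 2) (Fin 2) ℂ))ᴴ) = Y ⊗ₖ 1 := by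
  ext ⟨i, k⟩ ⟨j, l⟩
  fin_cases i <;> fin_cases k <;> fin_cases j <;> fin_cases l <;>
    simp [Y, kroneckerMap_apply, Matrix.conjTranspose_apply, Matrix.one_apply, Complex.ext_iff]

lemma hBH : (((1 : Matrix (Fin 2) (Fin 2) ℂ) ⊗ₖ Y)ᴴ) = 1 ⊗ₖ Y := by
  ext ⟨i, k⟩ ⟨j, l⟩
  fin_cases i <;> fin_cases k <;> fin_cases j <;> fin_cases l <;>
    simp [Y, kroneckerMap_apply, Matrix.conjTranspose_apply, Matrix.one_apply, Complex.ext_iff]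

lemma trace_YY : ((Y ⊗ₖ Y : Matrix (Fin 2 × Fin 2) (Fin 2 × Fin 2) ℂ)).trace = 0 := by
  simp [Matrix.trace, Fintype.sum_prod_type, Fin.sum_univ_two, Y, kroneckerMap_apply]

open scoped MatrixOrder in
lemma FR_Mab (a b : ℝ) (ha : 0 ≤ a) (hb : 0 ≤ b) :
    FR (Mab a ⊗ₖ Mab b) = (a + b + |a - b|) / 2 := by
  set m := |a - b| with hmdef
  have hm0 : 0 ≤ m := abs_nonneg _
  have hm2 : (m : ℂ) ^ 2 = ((a : ℂ) - b) ^ 2 := by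
    have := sq_abs (a - b); rw [← hmdef] at this; exact_mod_cast this
  set A : Matrix (Fin 2 × Fin 2) (Fin 2 × Fin 2) ℂ := Y ⊗ₖ 1 with hAdef
  set B : Matrix (Fin 2 × Fin 2) (Fin 2 × Fin 2) ℂ := 1 ⊗ₖ Y with hBdef
  set C : Matrix (Fin 2 × Fin 2) (Fin 2 × Fin 2) ℂ := Y ⊗ₖ Y with hCdef
  have hAA : A * A = 1 := by
    rw [hAdef, ← Matrix.mul_kronecker_mul, hY2]; simp
  have hBB : B * B = 1 := by
    rw [hBdef, ← Matrix.mul_kronecker_mul, hY2]; simp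
  have hAB : A * B = C := by
    rw [hAdef, hBdef, hCdef, ← Matrix.mul_kronecker_mul]; simp
  have hBA : B * A = C := by
    rw [hAdef, hBdef, hCdef, ← Matrix.mul_kronecker_mul]; simp
  have hCC : C * C = 1 := by
    rw [hCdef, ← Matrix.mul_kronecker_mul, hY2]; simp
  simp only [FR, traceNorm]
  set D := (Mab a ⊗ₖ Mab b) - (Mab a ⊗ₖ Mab b)ᵀ with hDdef
  have hDe : D = ((a/2 : ℝ) : ℂ) • A + ((b/2 : ℝ) : ℂ) • B := hD a b
  have hDH : Dᴴ = D := by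
    rw [hDe]
    simp [Matrix.conjTranspose_add, Matrix.conjTranspose_smul, hAdef, hBdef, hAH, hBH,
      Complex.star_def, Complex.conj_ofReal]
  set S : Matrix (Fin 2 × Fin 2) (Fin 2 × Fin 2) ℂ :=
    (((a + b + m)/4 : ℝ) : ℂ) • 1 + (((a + b - m)/4 : ℝ) : ℂ) • C with hSdef
  have hSS : S * S = Dᴴ * D := by
    rw [hDH, hDe, hSdef]
    simp only [Matrix.add_mul, Matrix.mul_add, Matrix.smul_mul, Matrix.mul_smul, smul_smul,
      hAA, hAB, hBA, hBB, hCC, Matrix.mul_one, Matrix.one_mul]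
    match_scalars
    · push_cast; linear_combination hm2 / 8
    · push_cast; linear_combination -hm2 / 8
  have h1C : (1 + C)ᴴ * (1 + C) = (2 : ℂ) • (1 + C) := by
    rw [Matrix.conjTranspose_add, Matrix.conjTranspose_one, hCdef, hCH, ← hCdef]
    simp only [Matrix.mul_add, Matrix.add_mul, hCC, Matrix.one_mul, Matrix.mul_one, two_smul]
    abel
  have h2C : (1 - C)ᴴ * (1 - C) = (2 : ℂ) • (1 - C) := by
    rw [Matrix.conjTranspose_sub, Matrix.conjTranspose_one, hCdef, hCH, ← hCdef]
    simp only [Matrix.mul_sub, Matrix.sub_mul, hCC, Matrix.one_mul, Matrix.mul_one, two_smul]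
    abel
  set u := Real.sqrt ((a+b)/8) with hudef
  set v := Real.sqrt (m/8) with hvdef
  have hu' : u * u = (a+b)/8 := Real.mul_self_sqrt (by positivity)
  have hv' : v * v = m/8 := Real.mul_self_sqrt (by positivity)
  have hu : (u : ℂ) * u = ((a : ℂ) + b)/8 := by exact_mod_cast congrArg Complex.ofReal hu'
  have hv : (v : ℂ) * v = (m : ℂ)/8 := by exact_mod_cast congrArg Complex.ofReal hv'
  have key : S = ((u : ℂ) • (1 + C))ᴴ * ((u : ℂ) • (1 + C))
      + ((v : ℂ) • (1 - C))ᴴ * ((v : ℂ) • (1 - C)) := by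
    rw [Matrix.conjTranspose_smul, Matrix.conjTranspose_smul, Matrix.smul_mul, Matrix.smul_mul,
      Matrix.mul_smul, Matrix.mul_smul, h1C, h2C]
    simp only [smul_smul, Complex.star_def, Complex.conj_ofReal]
    rw [show (u : ℂ) * ((u : ℂ) * 2) = ((a : ℂ) + b)/4 by linear_combination 2 * hu,
      show (v : ℂ) * ((v : ℂ) * 2) = (m : ℂ)/4 by linear_combination 2 * hv, hSdef]
    simp only [smul_add, smul_sub]
    match_scalars <;> push_cast <;> ring
  have hSpsd : S.PosSemidef := by
    rw [key]
    exact (Matrix.posSemidef_conjTranspose_mul_self _).add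
      (Matrix.posSemidef_conjTranspose_mul_self _)
  have hsqrt : S = (Matrix.posSemidef_conjTranspose_mul_self D).1.eigenvectorUnitary.1
      * diagonal (((↑) : ℝ → ℂ) ∘ (√·) ∘ (Matrix.posSemidef_conjTranspose_mul_self D).1.eigenvalues)
      * (star (Matrix.posSemidef_conjTranspose_mul_self D).1.eigenvectorUnitary
          : Matrix (Fin 2 × Fin 2) (Fin 2 × Fin 2) ℂ) := by
    have h := (Matrix.posSemidef_conjTranspose_mul_self D).1.cfc_eq Real.sqrt
    rw [IsHermitian.cfc, Unitary.conjStarAlgAut_apply] at h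
    have h2 : CFC.sqrt (Dᴴ * D) = S := CFC.sqrt_unique hSS hSpsd.nonneg
    rw [CFC.sqrt_eq_cfc, cfc_nnreal_eq_real _ (Dᴴ * D)
      (Matrix.posSemidef_conjTranspose_mul_self D).nonneg] at h2
    have hf : (fun x : ℝ => ((NNReal.sqrt x.toNNReal : NNReal) : ℝ)) = Real.sqrt := by
      funext x; rw [Real.sqrt]
    rw [hf] at h2
    rw [← h2]
    exact h
  rw [← hsqrt, hSdef]
  rw [Matrix.trace_add, Matrix.trace_smul, Matrix.trace_smul, Matrix.trace_one, hCdef, trace_YY]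
  simp [Fintype.card_prod]

lemma Mplus_eq : Mplus = Mab 1 := by
  simp [Mplus, Mab]

lemma dep2_eq (p₁ p₂ : ℝ) :
    dep2 p₁ p₂ Mplus Mplus = Mab (1 - p₁) ⊗ₖ Mab (1 - p₂) := by
  ext ⟨i, k⟩ ⟨j, l⟩
  fin_cases i <;> fin_cases k <;> fin_cases j <;> fin_cases l <;>
    simp [dep2, Mplus, Mab, kroneckerMap_apply, Matrix.one_apply] <;> ring

lemma Fl1_Mab (a b : ℝ) : Fl1 (Mab a ⊗ₖ Mab b) = |a| + |b| := by
  simp [Fl1, Mab, Fintype.sum_prod_type, Fin.sum_univ_two, kroneckerMap_apply, Prod.ext_iff,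
    abs_div, abs_neg, abs_mul]
  norm_num [abs_of_nonneg]
  ring

/-- decays of F_{l₁} and F_R of M₊ ⊗ M₊ under the two-qubit
depolarizing channel. -/
theorem dep2_decays (p₁ p₂ : ℝ) (hp₁0 : 0 ≤ p₁) (hp₁1 : p₁ ≤ 1)
    (hp₂0 : 0 ≤ p₂) (hp₂1 : p₂ ≤ 1) :
    Fl1 (Mplus ⊗ₖ Mplus) - Fl1 (dep2 p₁ p₂ Mplus Mplus) = p₁ + p₂ ∧
    FR (Mplus ⊗ₖ Mplus) - FR (dep2 p₁ p₂ Mplus Mplus)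
      = (p₁ + p₂ - |p₁ - p₂|) / 2 := by
  rw [dep2_eq, Mplus_eq, Fl1_Mab, Fl1_Mab, FR_Mab 1 1 (by norm_num) (by norm_num),
    FR_Mab (1 - p₁) (1 - p₂) (by linarith) (by linarith)]
  have h1 : |(1 - p₁) - (1 - p₂)| = |p₁ - p₂| := by
    rw [show (1 - p₁) - (1 - p₂) = -(p₁ - p₂) by ring, abs_neg]
  rw [h1, abs_of_nonneg (by linarith : (0:ℝ) ≤ 1 - p₁),
    abs_of_nonneg (by linarith : (0:ℝ) ≤ 1 - p₂)]
  norm_num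
  constructor <;> ring
end
end
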